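/- arXiv:1108.5878 — 2 statements merged into one kernel-verified Lean document; each statement's English description precedes it below -/
import Mathlib

section
/- Nonnegativity of the spatially discretized biosensor system: Fix γ > 0, v̄ > 0, grid parameters P, Q ≥ 2, step sizes Δy, Δz > 0 with Δy < γ/v̄, velocity values 0 ≤ v_j ≤ v̄ for j = 1,…,Q−1, inlet value A₁ ≥ 0, nonnegative rate constants f₁,…,f₇, r₁,…,r₇, and a subset V ⊆ {1,…,P−1} of sensor grid indices. Consider the ODE system in the variables A_{i,j}(t) for 1 ≤ i ≤ P−1, 1 ≤ j ≤ Q−1 and u^i(t) = (B^i, C^i, D^i, S^i, W^i, X^i, Y^i, Z^i) ∈ ℝ⁸ for i ∈ V, given by A′_{i,j} = γ(A_{i−1,j} − 2A_{i,j} + A_{i+1,j})/Δy² − v_j (A_{i+1,j} − A_{i,j})/Δy + γ(A_{i,j−1} − 2A_{i,j} + A_{i,j+1})/Δz² and (u^i)′ = G(u^i, A_{i,0}), where the boundary values are defined by A_{0,j} = A₁, A_{P,j} = A_{P−1,j}, A_{i,Q} = A_{i,Q−1}, A_{i,0} = A_{i,1} for i ∉ V, and A_{i,0} = (A_{i,1}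 + (Δz/γ)(r₁W^i + r₂X^i + r₆Z^i)) / (1 + (Δz/γ)(f₁B^i + f₂C^i + f₆D^i)) for i ∈ V. If the initial data satisfy A_{i,j}(0) ≥ 0 for all i, j and u^i(0) ≥ 0 componentwise for all i ∈ V, then any solution of this ODE system satisfies A_{i,j}(t) ≥ 0 and u^i(t) ≥ 0 componentwise for all t ≥ 0 in the interval of existence of the solution. -/
open Set Filter Topology

set_option maxHeartbeats 1000000

lemma continuousOn_finset_sup'_fun {ι : Type*} (s : Finset ι) (hs : s.Nonempty)
    (f : ι → ℝ → ℝ) (S : Set ℝ) (h : ∀ i ∈ s, ContinuousOn (f i) S) :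
    ContinuousOn (fun t => s.sup' hs (f · t)) S := by
  induction hs using Finset.Nonempty.cons_induction with
  | singleton i => simpa using h i (by simp)
  | cons i s his hs ih =>
      have : (fun t => (Finset.cons i s his).sup' (Finset.cons_nonempty his) (f · t)) =
          fun t => (f i t) ⊔ (s.sup' hs (f · t)) := by
        funext t; rw [Finset.sup'_cons]
      rw [this]
      exact ContinuousOn.sup' (h i (by simp)) (ih fun j hj => h j (Finset.mem_cons.2 (Or.inr hj)))

lemma quasipos_nonneg {ι : Type*} [Fintype ι] [Nonempty ι] {a b : ℝ} (hab : a < b)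
    {x F : ℝ → ι → ℝ} {K : ℝ} (hK : 0 < K)
    (hx : ∀ i, ∀ t ∈ Icc a b, HasDerivWithinAt (fun τ => x τ i) (F t i) (Icc a b) t)
    (h0 : ∀ i, 0 ≤ x a i)
    (hq : ∀ t ∈ Ico a b, ∀ i, x t i ≤ 0 → (∀ j, x t i ≤ x t j) → K * x t i ≤ F t i) :
    ∀ t ∈ Icc a b, ∀ i, 0 ≤ x t i := by
  have hcont : ∀ i, ContinuousOn (fun τ => x τ i) (Icc a b) :=
    fun i t ht => (hx i t ht).continuousWithinAt
  set w : ℝ → ℝ := fun t => Finset.univ.sup' Finset.univ_nonempty (fun i => max (-(x t i)) 0)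
    with hwdef
  have hwc : ContinuousOn w (Icc a b) := by
    apply continuousOn_finset_sup'_fun
    intro i _
    exact fun t ht => ((hcont i t ht).neg).max continuousWithinAt_const
  have hwnonneg : ∀ t, 0 ≤ w t := by
    intro t
    exact le_trans (le_max_right _ 0) (Finset.le_sup' (f := fun i => max (-(x t i)) 0) (Finset.mem_univ (Classical.arbitrary ι)))
  have hwge : ∀ t i, -(x t i) ≤ w t := fun t i =>
    le_trans (le_max_left _ 0) (Finset.le_sup' (f := fun i => max (-(x t i)) 0) (Finset.mem_univ i))
  have main : ∀ ε, 0 < ε → ∀ t ∈ Icc a b, w t ≤ gronwallBound 0 K ε (t - a) := by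
    intro ε hε
    apply le_gronwallBound_of_liminf_deriv_right_le (f' := fun t => K * w t + ε) hwc
    · -- slope condition
      intro t ht r hr
      have hrpos : 0 < r := lt_of_le_of_lt (by nlinarith [hwnonneg t, hK.le]) hr
      have hLne : (𝓝[Ioc t b] t).NeBot := left_nhdsWithin_Ioc_neBot ht.2
      have hsub : Ioc t b ⊆ Icc a b := fun z hz => ⟨ht.1.trans hz.1.le, hz.2⟩
      have hmem : t ∈ Icc a b := ⟨ht.1, ht.2.le⟩
      have key : ∀ i : ι, ∀ᶠ z in 𝓝[Ioc t b] t, max (-(x z i)) 0 - w t < r * (z - t) := by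
        intro i
        have hct : Tendsto (fun z => x z i) (𝓝[Ioc t b] t) (𝓝 (x t i)) :=
          ((hcont i) t hmem).mono_left (nhdsWithin_mono t hsub)
        have hz : ∀ᶠ z in 𝓝[Ioc t b] t, z ∈ Ioc t b := self_mem_nhdsWithin
        rcases lt_or_ge (max (-(x t i)) 0) (w t) with hmax | hmax
        · have hev : ∀ᶠ z in 𝓝[Ioc t b] t, max (-(x z i)) 0 < w t :=
            Filter.Tendsto.eventually_lt_const hmax ((hct.neg).max tendsto_const_nhds)
          filter_upwards [hev, hz] with z h1 h2
          have : 0 < r * (z - t) := mul_pos hrpos (sub_pos.2 h2.1)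
          linarith
        · have heq : max (-(x t i)) 0 = w t :=
            le_antisymm (max_le (hwge t i) (hwnonneg t)) hmax
          rcases lt_or_ge 0 (x t i) with hxi | hxi
          · have hwt : w t = 0 := by
              rw [← heq]; exact max_eq_right (by linarith)
            have hev : ∀ᶠ z in 𝓝[Ioc t b] t, 0 < x z i :=
              Filter.Tendsto.eventually_const_lt hxi hct
            filter_upwards [hev, hz] with z h1 h2
            have h3 : max (-(x z i)) 0 = 0 := max_eq_right (by linarith)
            have : 0 < r * (z - t) := mul_pos hrpos (sub_pos.2 h2.1)
            rw [h3, hwt]; linarith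
          · have hmaxeq : max (-(x t i)) 0 = -(x t i) := max_eq_left (by linarith)
            have hwt : w t = -(x t i) := by rw [← heq, hmaxeq]
            have hmin : ∀ j, x t i ≤ x t j := by
              intro j
              have h1 := hwge t j
              rw [hwt] at h1
              linarith
            have hFt := hq t ht i hxi hmin
            have hslope : Tendsto (slope (fun τ => x τ i) t) (𝓝[Ioc t b] t) (𝓝 (F t i)) := by
              have h2 := hx i t hmem
              rw [hasDerivWithinAt_iff_tendsto_slope] at h2
              exact h2.mono_left (nhdsWithin_mono t (fun z hz => ⟨hsub hz, ne_of_gt hz.1⟩))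
            have hFr : -r < F t i := by nlinarith [hwt]
            have hev : ∀ᶠ z in 𝓝[Ioc t b] t, -r < slope (fun τ => x τ i) t z :=
              Filter.Tendsto.eventually_const_lt hFr hslope
            filter_upwards [hev, hz] with z h1 h2
            have hzt : 0 < z - t := sub_pos.2 h2.1
            rw [slope_def_field] at h1
            have h4 : -r * (z - t) < x z i - x t i := (lt_div_iff₀ hzt).1 h1
            have h6 : 0 < r * (z - t) := mul_pos hrpos hzt
            have h7 : max (-(x z i)) 0 < w t + r * (z - t) :=
              max_lt (by rw [hwt]; linarith) (by linarith [hwnonneg t])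
            linarith
      have hfin : ∀ᶠ z in 𝓝[Ioc t b] t, (z - t)⁻¹ * (w z - w t) < r := by
        filter_upwards [eventually_all.2 key, self_mem_nhdsWithin] with z hzk hzm
        have hzt : 0 < z - t := sub_pos.2 hzm.1
        have h5 : w z < w t + r * (z - t) := by
          apply (Finset.sup'_lt_iff Finset.univ_nonempty).2
          intro i _
          linarith [hzk i]
        calc (z - t)⁻¹ * (w z - w t) < (z - t)⁻¹ * (r * (z - t)) :=
              mul_lt_mul_of_pos_left (by linarith) (inv_pos.2 hzt)
          _ = r := by field_simp
      exact hfin.frequently.filter_mono (nhdsWithin_mono t Ioc_subset_Ioi_self)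
    · -- initial value
      apply Finset.sup'_le
      intro i _
      exact max_le (neg_nonpos.2 (h0 i)) le_rfl
    · intro t ht; exact le_rfl
  intro t ht i
  have hle : w t ≤ 0 := by
    have htend : Tendsto (fun ε => gronwallBound 0 K ε (t - a)) (𝓝[>] (0:ℝ))
        (𝓝 (gronwallBound 0 K 0 (t - a))) :=
      ((gronwallBound_continuous_ε 0 K (t - a)).tendsto 0).mono_left nhdsWithin_le_nhds
    rw [gronwallBound_ε0_δ0] at htend
    exact ge_of_tendsto htend (eventually_nhdsWithin_of_forall fun ε hε => main ε hε t ht)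
  linarith [hwge t i]

lemma mul_lower {q₁ q₂ M μ : ℝ} (hμ : μ ≤ 0) (hM : 0 ≤ M) (h₁ : μ ≤ q₁) (h₂ : μ ≤ q₂)
    (b₁ : q₁ ≤ M) (b₂ : q₂ ≤ M) : M * μ ≤ q₁ * q₂ := by
  rcases le_or_gt 0 q₁ with h | h
  · rcases le_or_gt 0 q₂ with h' | h'
    · nlinarith
    · nlinarith
  · nlinarith

lemma term_lb {f q₁ q₂ M₂ c₃ m : ℝ} (hf : 0 ≤ f) (hm : m ≤ 0) (hM : 0 ≤ M₂) (hc : 1 ≤ c₃)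
    (h1 : c₃ * m ≤ q₁) (h2 : c₃ * m ≤ q₂) (b1 : q₁ ≤ M₂) (b2 : q₂ ≤ M₂) :
    f * (c₃ * (M₂ + 1) * m) ≤ f * q₁ * q₂ := by
  have hcm : c₃ * m ≤ 0 := mul_nonpos_of_nonneg_of_nonpos (by linarith) hm
  have h := mul_lower hcm hM h1 h2 b1 b2
  have h2' : c₃ * (M₂ + 1) * m ≤ M₂ * (c₃ * m) := by nlinarith
  calc f * (c₃ * (M₂ + 1) * m) ≤ f * (q₁ * q₂) :=
        mul_le_mul_of_nonneg_left (h2'.trans h) hf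
    _ = f * q₁ * q₂ := by ring

lemma term_diag {f q m M₂ c₃ : ℝ} (hf : 0 ≤ f) (hm : m ≤ 0) (hM : 0 ≤ M₂) (hc : 1 ≤ c₃)
    (h : -M₂ ≤ q) : f * (c₃ * (M₂ + 1) * m) ≤ -(f * q * m) := by
  have h1 : q * m ≤ M₂ * (-m) := by nlinarith
  have h2 : f * (q * m) ≤ f * (M₂ * (-m)) := mul_le_mul_of_nonneg_left h1 hf
  have h3 : 0 ≤ f * (-m) * M₂ * (c₃ - 1) :=
    mul_nonneg (mul_nonneg (mul_nonneg hf (neg_nonneg.2 hm)) hM) (sub_nonneg.2 hc)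
  have h4 : 0 ≤ f * (-m) * c₃ := mul_nonneg (mul_nonneg hf (neg_nonneg.2 hm)) (by linarith)
  nlinarith [h2, h3, h4]

lemma term_lin {r q m c₃ M₂ : ℝ} (hr : 0 ≤ r) (hm : m ≤ 0) (hM : 0 ≤ M₂) (hc : 1 ≤ c₃)
    (h : c₃ * m ≤ q) : r * (c₃ * (M₂ + 1) * m) ≤ r * q := by
  have h3 : 0 ≤ c₃ * (-m) * M₂ := mul_nonneg (mul_nonneg (by linarith) (neg_nonneg.2 hm)) hM
  exact mul_le_mul_of_nonneg_left (le_trans (by nlinarith [h3]) h) hr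

lemma term_lin_diag {r m c₃ M₂ : ℝ} (hr : 0 ≤ r) (hm : m ≤ 0) (hM : 0 ≤ M₂) (hc : 1 ≤ c₃) :
    r * (c₃ * (M₂ + 1) * m) ≤ -(r * m) := by
  have h3 : 0 ≤ r * c₃ * (M₂ + 1) * (-m) :=
    mul_nonneg (mul_nonneg (mul_nonneg hr (by linarith)) (by linarith)) (neg_nonneg.2 hm)
  have h4 : 0 ≤ r * (-m) := mul_nonneg hr (neg_nonneg.2 hm)
  nlinarith [h3, h4]


/-- The right-hand side `G(u, A)` of the ICS biosensor chemical dynamics, for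
`u = (B, C, D, S, W, X, Y, Z) ∈ ℝ⁸` (indexed `0,…,7`), concentration `A`, and rate
constants `f₁,…,f₇, r₁,…,r₇`. -/
noncomputable def icsG (f₁ f₂ f₃ f₄ f₅ f₆ f₇ r₁ r₂ r₃ r₄ r₅ r₆ r₇ A : ℝ)
    (u : Fin 8 → ℝ) : Fin 8 → ℝ :=
  ![-(f₁ * A * u 0 - r₁ * u 4) - (f₄ * u 5 * u 0 - r₄ * u 6),
    -(f₂ * A * u 1 - r₂ * u 5) - (f₃ * u 4 * u 1 - r₃ * u 6) - (f₅ * u 1 * u 3 - r₅ * u 2),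
    (f₅ * u 1 * u 3 - r₅ * u 2) - (f₆ * A * u 2 - r₆ * u 7),
    -(f₅ * u 1 * u 3 - r₅ * u 2) - (f₇ * u 5 * u 3 - r₇ * u 7),
    (f₁ * A * u 0 - r₁ * u 4) - (f₃ * u 4 * u 1 - r₃ * u 6),
    (f₂ * A * u 1 - r₂ * u 5) - (f₄ * u 5 * u 0 - r₄ * u 6) - (f₇ * u 5 * u 3 - r₇ * u 7),
    (f₃ * u 4 * u 1 - r₃ * u 6) + (f₄ * u 5 * u 0 - r₄ * u 6),
    (f₆ * A * u 2 - r₆ * u 7) + (f₇ * u 5 * u 3 - r₇ * u 7)]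

/-- Nonnegativity of the spatially discretized biosensor system: any solution of the
finite-difference discretization of the advection–diffusion equation, coupled with the ICS
chemical dynamics at the sensor grid points through the discretized reactive boundary
condition, that starts from componentwise nonnegative data stays componentwise nonnegative
on its interval of existence `[0, T)`. -/
theorem discretized_biosensor_system_nonneg
    {γ vbar Δy Δz A₁ : ℝ} (hγ : 0 < γ) (hvbar : 0 < vbar)
    (hΔy : 0 < Δy) (hΔz : 0 < Δz) (hΔyγ : Δy < γ / vbar) (hA₁ : 0 ≤ A₁)
    {P Q : ℕ} (hP : 2 ≤ P) (hQ : 2 ≤ Q)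
    -- velocity values at the interior grid heights
    (v : ℕ → ℝ) (hv : ∀ j, 1 ≤ j → j ≤ Q - 1 → 0 ≤ v j ∧ v j ≤ vbar)
    -- nonnegative rate constants
    (f₁ f₂ f₃ f₄ f₅ f₆ f₇ r₁ r₂ r₃ r₄ r₅ r₆ r₇ : ℝ)
    (hf₁ : 0 ≤ f₁) (hf₂ : 0 ≤ f₂) (hf₃ : 0 ≤ f₃) (hf₄ : 0 ≤ f₄) (hf₅ : 0 ≤ f₅)
    (hf₆ : 0 ≤ f₆) (hf₇ : 0 ≤ f₇)
    (hr₁ : 0 ≤ r₁) (hr₂ : 0 ≤ r₂) (hr₃ : 0 ≤ r₃) (hr₄ : 0 ≤ r₄) (hr₅ : 0 ≤ r₅)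
    (hr₆ : 0 ≤ r₆) (hr₇ : 0 ≤ r₇)
    -- the set of sensor grid indices
    (V : Finset ℕ) (hV : ∀ i ∈ V, 1 ≤ i ∧ i ≤ P - 1)
    -- a solution (A, u) on the interval of existence [0, T)
    {T : ℝ} (hT : 0 < T)
    (A : ℝ → ℕ → ℕ → ℝ) (u : ℝ → ℕ → Fin 8 → ℝ)
    -- boundary values
    (hinlet : ∀ t ∈ Ico 0 T, ∀ j ≤ Q, A t 0 j = A₁)
    (houtlet : ∀ t ∈ Ico 0 T, ∀ j ≤ Q, A t P j = A t (P - 1) j)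
    (hceiling : ∀ t ∈ Ico 0 T, ∀ i ≤ P, A t i Q = A t i (Q - 1))
    (hfloor : ∀ t ∈ Ico 0 T, ∀ i, 1 ≤ i → i ≤ P - 1 → i ∉ V → A t i 0 = A t i 1)
    (hsensor : ∀ t ∈ Ico 0 T, ∀ i ∈ V,
      A t i 0 = (A t i 1 + (Δz / γ) * (r₁ * u t i 4 + r₂ * u t i 5 + r₆ * u t i 7)) /
        (1 + (Δz / γ) * (f₁ * u t i 0 + f₂ * u t i 1 + f₆ * u t i 2)))
    -- the discretized advection–diffusion ODEs at the interior grid points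
    (hodeA : ∀ t ∈ Ico 0 T, ∀ i j, 1 ≤ i → i ≤ P - 1 → 1 ≤ j → j ≤ Q - 1 →
      HasDerivWithinAt (fun τ => A τ i j)
        (γ * (A t (i - 1) j - 2 * A t i j + A t (i + 1) j) / Δy ^ 2
          - v j * (A t (i + 1) j - A t i j) / Δy
          + γ * (A t i (j - 1) - 2 * A t i j + A t i (j + 1)) / Δz ^ 2)
        (Ico 0 T) t)
    -- the ICS chemical dynamics at the sensor grid points
    (hodeu : ∀ t ∈ Ico 0 T, ∀ i ∈ V, ∀ k,
      HasDerivWithinAt (fun τ => u τ i k)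
        (icsG f₁ f₂ f₃ f₄ f₅ f₆ f₇ r₁ r₂ r₃ r₄ r₅ r₆ r₇ (A t i 0) (u t i) k)
        (Ico 0 T) t)
    -- nonnegative initial data
    (hinitA : ∀ i j, 1 ≤ i → i ≤ P - 1 → 1 ≤ j → j ≤ Q - 1 → 0 ≤ A 0 i j)
    (hinitu : ∀ i ∈ V, ∀ k, 0 ≤ u 0 i k) :
    ∀ t ∈ Ico 0 T,
      (∀ i j, 1 ≤ i → i ≤ P - 1 → 1 ≤ j → j ≤ Q - 1 → 0 ≤ A t i j) ∧
      (∀ i ∈ V, ∀ k, 0 ≤ u t i k) := by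
  have hγΔ : 0 ≤ Δz / γ := le_of_lt (div_pos hΔz hγ)
  intro t₀ ht₀
  set s : Set ℝ := {t | (∀ i j, 1 ≤ i → i ≤ P - 1 → 1 ≤ j → j ≤ Q - 1 → 0 ≤ A t i j) ∧
      (∀ i ∈ V, ∀ k, 0 ≤ u t i k)} with hs_def
  have hIccT : Icc 0 t₀ ⊆ Ico 0 T := fun z hz => ⟨hz.1, lt_of_le_of_lt hz.2 ht₀.2⟩
  have contA : ∀ i j, 1 ≤ i → i ≤ P - 1 → 1 ≤ j → j ≤ Q - 1 →
      ContinuousOn (fun t => A t i j) (Ico 0 T) :=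
    fun i j h1 h2 h3 h4 t ht => (hodeA t ht i j h1 h2 h3 h4).continuousWithinAt
  have contu : ∀ i ∈ V, ∀ k, ContinuousOn (fun t => u t i k) (Ico 0 T) :=
    fun i hi k t ht => (hodeu t ht i hi k).continuousWithinAt
  suffices h : Icc 0 t₀ ⊆ s from (h ⟨ht₀.1, le_rfl⟩ : t₀ ∈ s)
  apply IsClosed.Icc_subset_of_forall_exists_gt (s := s)
  · -- closedness
    have heq : s ∩ Icc 0 t₀ =
        (Icc 0 t₀ ∩
          (⋂ (i : ℕ) (j : ℕ) (_ : 1 ≤ i ∧ i ≤ P - 1 ∧ 1 ≤ j ∧ j ≤ Q - 1),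
            Icc 0 t₀ ∩ (fun t => A t i j) ⁻¹' Ici 0)) ∩
          (⋂ (i : ℕ) (_ : i ∈ V) (k : Fin 8), Icc 0 t₀ ∩ (fun t => u t i k) ⁻¹' Ici 0) := by
      ext z
      simp only [hs_def, mem_inter_iff, mem_iInter, mem_setOf_eq, mem_preimage, mem_Ici]
      constructor
      · rintro ⟨⟨h1, h2⟩, hz⟩
        exact ⟨⟨hz, fun i j h => ⟨hz, h1 i j h.1 h.2.1 h.2.2.1 h.2.2.2⟩⟩,
          fun i hi k => ⟨hz, h2 i hi k⟩⟩
      · rintro ⟨⟨hz, h1⟩, h2⟩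
        exact ⟨⟨fun i j a b c' d => (h1 i j ⟨a, b, c', d⟩).2, fun i hi k => (h2 i hi k).2⟩, hz⟩
    rw [heq]
    refine IsClosed.inter (IsClosed.inter isClosed_Icc ?_) ?_
    · exact isClosed_iInter fun i => isClosed_iInter fun j => isClosed_iInter fun h =>
        ((contA i j h.1 h.2.1 h.2.2.1 h.2.2.2).mono hIccT).preimage_isClosed_of_isClosed
          isClosed_Icc isClosed_Ici
    · exact isClosed_iInter fun i => isClosed_iInter fun hi => isClosed_iInter fun k =>
        ((contu i hi k).mono hIccT).preimage_isClosed_of_isClosed isClosed_Icc isClosed_Ici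
  · exact ⟨hinitA, hinitu⟩
  · -- the induction step
    rintro c ⟨hcs, hc0, hct₀⟩ y hy
    have hcT : c < T := lt_trans hct₀ ht₀.2
    have hcIco : c ∈ Ico 0 T := ⟨hc0, hcT⟩
    -- the denominators of the sensor boundary condition stay above 1/2 for a short time
    have hev : ∀ᶠ t in 𝓝[Ico 0 T] c, ∀ i ∈ V,
        (1:ℝ)/2 < 1 + Δz / γ * (f₁ * u t i 0 + f₂ * u t i 1 + f₆ * u t i 2) := by
      rw [eventually_all_finset]
      intro i hi
      have h0 := hcs.2 i hi
      have hX : 0 ≤ f₁ * u c i 0 + f₂ * u c i 1 + f₆ * u c i 2 := by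
        have := mul_nonneg hf₁ (h0 0); have := mul_nonneg hf₂ (h0 1)
        have := mul_nonneg hf₆ (h0 2); linarith
      have hDc : (1:ℝ)/2 < 1 + Δz / γ * (f₁ * u c i 0 + f₂ * u c i 1 + f₆ * u c i 2) := by
        have := mul_nonneg hγΔ hX; linarith
      have hDcont : ContinuousWithinAt
          (fun t => 1 + Δz / γ * (f₁ * u t i 0 + f₂ * u t i 1 + f₆ * u t i 2)) (Ico 0 T) c :=
        continuousWithinAt_const.add (continuousWithinAt_const.mul
          (((continuousWithinAt_const.mul (contu i hi 0 c hcIco)).add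
            (continuousWithinAt_const.mul (contu i hi 1 c hcIco))).add
            (continuousWithinAt_const.mul (contu i hi 2 c hcIco))))
      exact Filter.Tendsto.eventually_const_lt hDc hDcont
    rw [Filter.Eventually, Metric.mem_nhdsWithin_iff] at hev
    obtain ⟨δ₀, hδ₀, hball⟩ := hev
    set δ : ℝ := min (δ₀/2) (min ((T - c)/2) (y - c)) with hδdef
    have hδpos : 0 < δ := lt_min (by linarith) (lt_min (by linarith) (by linarith [mem_Ioi.1 hy]))
    set b₂ : ℝ := c + δ with hb₂def
    have hcb₂ : c < b₂ := by simp only [hb₂def]; linarith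
    have hδT : δ ≤ (T - c)/2 := (min_le_right _ _).trans (min_le_left _ _)
    have hδy : δ ≤ y - c := (min_le_right _ _).trans (min_le_right _ _)
    have hδ₀' : δ ≤ δ₀/2 := min_le_left _ _
    have hsubIcoT : Icc c b₂ ⊆ Ico 0 T := by
      intro z hz
      refine ⟨le_trans hc0 hz.1, ?_⟩
      have := hz.2; simp only [hb₂def] at this; linarith
    have hD : ∀ t ∈ Icc c b₂, ∀ i ∈ V,
        (1:ℝ)/2 < 1 + Δz / γ * (f₁ * u t i 0 + f₂ * u t i 1 + f₆ * u t i 2) := by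
      intro t htm
      refine hball ⟨?_, hsubIcoT htm⟩
      rw [Metric.mem_ball, Real.dist_eq, abs_of_nonneg (by linarith [htm.1])]
      have := htm.2; simp only [hb₂def] at this; linarith
    -- the combined family of unknowns
    have hmemA : ∀ p : ℕ × ℕ, p ∈ Finset.Icc 1 (P-1) ×ˢ Finset.Icc 1 (Q-1) →
        1 ≤ p.1 ∧ p.1 ≤ P - 1 ∧ 1 ≤ p.2 ∧ p.2 ≤ Q - 1 := by
      intro p hp
      rw [Finset.mem_product, Finset.mem_Icc, Finset.mem_Icc] at hp
      exact ⟨hp.1.1, hp.1.2, hp.2.1, hp.2.2⟩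
    have hmemA' : ∀ p : ℕ × ℕ, 1 ≤ p.1 → p.1 ≤ P - 1 → 1 ≤ p.2 → p.2 ≤ Q - 1 →
        p ∈ Finset.Icc 1 (P-1) ×ˢ Finset.Icc 1 (Q-1) := by
      intro p h1 h2 h3 h4
      rw [Finset.mem_product, Finset.mem_Icc, Finset.mem_Icc]
      exact ⟨⟨h1, h2⟩, ⟨h3, h4⟩⟩
    haveI hne : Nonempty (↥(Finset.Icc 1 (P-1) ×ˢ Finset.Icc 1 (Q-1)) ⊕ (↥V × Fin 8)) :=
      ⟨Sum.inl ⟨(1,1), hmemA' (1,1) le_rfl (by omega) le_rfl (by omega)⟩⟩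
    set x : ℝ → (↥(Finset.Icc 1 (P-1) ×ˢ Finset.Icc 1 (Q-1)) ⊕ (↥V × Fin 8)) → ℝ :=
      fun t idx => match idx with
        | .inl p => A t p.1.1 p.1.2
        | .inr q => u t q.1.1 q.2 with hx_def
    set F : ℝ → (↥(Finset.Icc 1 (P-1) ×ˢ Finset.Icc 1 (Q-1)) ⊕ (↥V × Fin 8)) → ℝ :=
      fun t idx => match idx with
        | .inl p => γ * (A t (p.1.1 - 1) p.1.2 - 2 * A t p.1.1 p.1.2 + A t (p.1.1 + 1) p.1.2) / Δy ^ 2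
            - v p.1.2 * (A t (p.1.1 + 1) p.1.2 - A t p.1.1 p.1.2) / Δy
            + γ * (A t p.1.1 (p.1.2 - 1) - 2 * A t p.1.1 p.1.2 + A t p.1.1 (p.1.2 + 1)) / Δz ^ 2
        | .inr q => icsG f₁ f₂ f₃ f₄ f₅ f₆ f₇ r₁ r₂ r₃ r₄ r₅ r₆ r₇ (A t q.1.1 0) (u t q.1.1) q.2
      with hF_def
    have hderiv : ∀ idx, ∀ t ∈ Icc c b₂,
        HasDerivWithinAt (fun τ => x τ idx) (F t idx) (Icc c b₂) t := by
      rintro (⟨p, hp⟩ | ⟨⟨i, hi⟩, k⟩) t ht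
      · obtain ⟨h1, h2, h3, h4⟩ := hmemA p hp
        exact (hodeA t (hsubIcoT ht) p.1 p.2 h1 h2 h3 h4).mono hsubIcoT
      · exact (hodeu t (hsubIcoT ht) i hi k).mono hsubIcoT
    have hx0 : ∀ idx, 0 ≤ x c idx := by
      rintro (⟨p, hp⟩ | ⟨⟨i, hi⟩, k⟩)
      · obtain ⟨h1, h2, h3, h4⟩ := hmemA p hp
        exact hcs.1 p.1 p.2 h1 h2 h3 h4
      · exact hcs.2 i hi k
    -- uniform bound on the family over the compact interval
    obtain ⟨C, hC⟩ := (isCompact_Icc : IsCompact (Icc c b₂)).exists_bound_of_continuousOn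
      (f := fun t => fun idx => x t idx) (by
        apply continuousOn_pi.2
        rintro (⟨p, hp⟩ | ⟨⟨i, hi⟩, k⟩)
        · obtain ⟨h1, h2, h3, h4⟩ := hmemA p hp
          exact (contA p.1 p.2 h1 h2 h3 h4).mono hsubIcoT
        · exact (contu i hi k).mono hsubIcoT)
    set M : ℝ := max C 1 with hM_def
    clear_value M
    have hM1 : (1:ℝ) ≤ M := hM_def ▸ le_max_right C 1
    have habs : ∀ t ∈ Icc c b₂, ∀ idx, |x t idx| ≤ M := by
      intro t ht idx
      have h1 : ‖x t idx‖ ≤ ‖fun idx => x t idx‖ := norm_le_pi_norm (fun idx => x t idx) idx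
      have h2 : ‖fun idx => x t idx‖ ≤ C := hC t ht
      rw [Real.norm_eq_abs] at h1
      exact h1.trans (h2.trans (hM_def ▸ le_max_left C 1))
    -- constants
    set c₁ : ℝ := 1 + Δz / γ * (r₁ + r₂ + r₆) with hc₁def
    clear_value c₁
    have hc₁1 : 1 ≤ c₁ := by
      have := mul_nonneg hγΔ (by linarith : (0:ℝ) ≤ r₁ + r₂ + r₆)
      simp only [hc₁def]; linarith
    set M₁ : ℝ := c₁ * M with hM₁def
    clear_value M₁
    have hM₁0 : 0 ≤ M₁ := by
      have : (0:ℝ) ≤ c₁ * M := mul_nonneg (by linarith) (by linarith)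
      simpa [hM₁def] using this
    set c₃ : ℝ := 2 * c₁ + 1 with hc₃def
    clear_value c₃
    have hc₃1 : 1 ≤ c₃ := by simp only [hc₃def]; linarith
    set M₂ : ℝ := M + 2 * M₁ + 1 with hM₂def
    clear_value M₂
    have hM₂0 : 0 ≤ M₂ := by simp only [hM₂def]; linarith
    have hMM₂ : M ≤ M₂ := by simp only [hM₂def]; linarith
    set K : ℝ := c₃ * (2 * γ / Δy ^ 2 + 2 * γ / Δz ^ 2)
      + c₃ * (M₂ + 1) * (f₁ + f₂ + f₃ + f₄ + f₅ + f₆ + f₇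
          + r₁ + r₂ + r₃ + r₄ + r₅ + r₆ + r₇) + 1 with hK_def
    clear_value K
    have hKpos : 0 < K := by
      have h1 : (0:ℝ) ≤ c₃ * (2 * γ / Δy ^ 2 + 2 * γ / Δz ^ 2) :=
        mul_nonneg (by linarith) (by positivity)
      have h2 : (0:ℝ) ≤ c₃ * (M₂ + 1) * (f₁ + f₂ + f₃ + f₄ + f₅ + f₆ + f₇
          + r₁ + r₂ + r₃ + r₄ + r₅ + r₆ + r₇) :=
        mul_nonneg (mul_nonneg (by linarith) (by linarith)) (by linarith)
      simp only [hK_def]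
      linarith only [h1, h2]
    -- control of the sensor boundary value
    have hA0 : ∀ t ∈ Icc c b₂, ∀ m : ℝ, m ≤ 0 → (∀ idx, m ≤ x t idx) → ∀ i, ∀ hi : i ∈ V,
        c₃ * m ≤ A t i 0 ∧ -M₂ ≤ A t i 0 ∧ A t i 0 ≤ M₂ := by
      intro t ht m hm hlow i hi
      obtain ⟨hi1, hi2⟩ := hV i hi
      have htT := hsubIcoT ht
      have hd := hD t ht i hi
      have hpmem : ((i, 1) : ℕ × ℕ) ∈ Finset.Icc 1 (P-1) ×ˢ Finset.Icc 1 (Q-1) :=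
        hmemA' (i, 1) hi1 hi2 le_rfl (by omega)
      have hA1low : m ≤ A t i 1 := hlow (Sum.inl ⟨(i, 1), hpmem⟩)
      have hA1abs : |A t i 1| ≤ M := habs t ht (Sum.inl ⟨(i, 1), hpmem⟩)
      have hulow : ∀ k, m ≤ u t i k := fun k => hlow (Sum.inr ⟨⟨i, hi⟩, k⟩)
      have huabs : ∀ k, |u t i k| ≤ M := fun k => habs t ht (Sum.inr ⟨⟨i, hi⟩, k⟩)
      have hAeq := hsensor t htT i hi
      have hd0 : (0:ℝ) < 1 + Δz / γ * (f₁ * u t i 0 + f₂ * u t i 1 + f₆ * u t i 2) := by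
        linarith
      have hNlow : c₁ * m ≤ A t i 1 + Δz / γ * (r₁ * u t i 4 + r₂ * u t i 5 + r₆ * u t i 7) := by
        have e1 : 0 ≤ Δz / γ * r₁ * (u t i 4 - m) :=
          mul_nonneg (mul_nonneg hγΔ hr₁) (by linarith [hulow 4])
        have e2 : 0 ≤ Δz / γ * r₂ * (u t i 5 - m) :=
          mul_nonneg (mul_nonneg hγΔ hr₂) (by linarith [hulow 5])
        have e3 : 0 ≤ Δz / γ * r₆ * (u t i 7 - m) :=
          mul_nonneg (mul_nonneg hγΔ hr₆) (by linarith [hulow 7])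
        simp only [hc₁def]; nlinarith only [hA1low, e1, e2, e3, hm]
      have hNub : A t i 1 + Δz / γ * (r₁ * u t i 4 + r₂ * u t i 5 + r₆ * u t i 7) ≤ M₁ := by
        have e1 : 0 ≤ Δz / γ * r₁ * (M - u t i 4) :=
          mul_nonneg (mul_nonneg hγΔ hr₁) (by linarith [(abs_le.1 (huabs 4)).2])
        have e2 : 0 ≤ Δz / γ * r₂ * (M - u t i 5) :=
          mul_nonneg (mul_nonneg hγΔ hr₂) (by linarith [(abs_le.1 (huabs 5)).2])
        have e3 : 0 ≤ Δz / γ * r₆ * (M - u t i 7) :=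
          mul_nonneg (mul_nonneg hγΔ hr₆) (by linarith [(abs_le.1 (huabs 7)).2])
        have hA1 := (abs_le.1 hA1abs).2
        simp only [hM₁def, hc₁def]; nlinarith only [hA1, e1, e2, e3, hM1]
      have hNlb : -M₁ ≤ A t i 1 + Δz / γ * (r₁ * u t i 4 + r₂ * u t i 5 + r₆ * u t i 7) := by
        have e1 : 0 ≤ Δz / γ * r₁ * (u t i 4 + M) :=
          mul_nonneg (mul_nonneg hγΔ hr₁) (by linarith [(abs_le.1 (huabs 4)).1])
        have e2 : 0 ≤ Δz / γ * r₂ * (u t i 5 + M) :=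
          mul_nonneg (mul_nonneg hγΔ hr₂) (by linarith [(abs_le.1 (huabs 5)).1])
        have e3 : 0 ≤ Δz / γ * r₆ * (u t i 7 + M) :=
          mul_nonneg (mul_nonneg hγΔ hr₆) (by linarith [(abs_le.1 (huabs 7)).1])
        have hA1 := (abs_le.1 hA1abs).1
        simp only [hM₁def, hc₁def]; nlinarith only [hA1, e1, e2, e3, hM1]
      rw [hAeq]
      rcases le_or_gt 0 (A t i 1 + Δz / γ * (r₁ * u t i 4 + r₂ * u t i 5 + r₆ * u t i 7))
        with hs0 | hs0
      · have h1 : 0 ≤ (A t i 1 + Δz / γ * (r₁ * u t i 4 + r₂ * u t i 5 + r₆ * u t i 7)) /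
            (1 + Δz / γ * (f₁ * u t i 0 + f₂ * u t i 1 + f₆ * u t i 2)) :=
          div_nonneg hs0 hd0.le
        have h2 : (A t i 1 + Δz / γ * (r₁ * u t i 4 + r₂ * u t i 5 + r₆ * u t i 7)) /
            (1 + Δz / γ * (f₁ * u t i 0 + f₂ * u t i 1 + f₆ * u t i 2)) ≤
            2 * (A t i 1 + Δz / γ * (r₁ * u t i 4 + r₂ * u t i 5 + r₆ * u t i 7)) := by
          rw [div_le_iff₀ hd0]; nlinarith only [hs0, hd]
        have hc₃m : c₃ * m ≤ 0 := mul_nonpos_of_nonneg_of_nonpos (by linarith only [hc₃1]) hm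
        refine ⟨by linarith only [hc₃m, h1], by linarith only [h1, hM₂0],
          by simp only [hM₂def]; linarith only [h2, hNub, hM1]⟩
      · have h2 : 2 * (A t i 1 + Δz / γ * (r₁ * u t i 4 + r₂ * u t i 5 + r₆ * u t i 7)) ≤
            (A t i 1 + Δz / γ * (r₁ * u t i 4 + r₂ * u t i 5 + r₆ * u t i 7)) /
            (1 + Δz / γ * (f₁ * u t i 0 + f₂ * u t i 1 + f₆ * u t i 2)) := by
          rw [le_div_iff₀ hd0]; nlinarith only [hs0, hd]
        have h1 : (A t i 1 + Δz / γ * (r₁ * u t i 4 + r₂ * u t i 5 + r₆ * u t i 7)) /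
            (1 + Δz / γ * (f₁ * u t i 0 + f₂ * u t i 1 + f₆ * u t i 2)) ≤ 0 :=
          div_nonpos_of_nonpos_of_nonneg hs0.le hd0.le
        refine ⟨?_, by simp only [hM₂def]; linarith only [h2, hNlb, hM1],
          by simp only [hM₂def]; linarith only [h1, hM1, hM₁0]⟩
        have h3 : c₃ * m ≤ 2 * (c₁ * m) := by simp only [hc₃def]; nlinarith only [hm]
        have h4 := mul_le_mul_of_nonneg_left hNlow (by norm_num : (0:ℝ) ≤ 2)
        linarith only [h2, h3, h4]
    -- verification of the quasipositivity estimate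
    have hq : ∀ t ∈ Ico c b₂, ∀ idx, x t idx ≤ 0 → (∀ jdx, x t idx ≤ x t jdx) →
        K * x t idx ≤ F t idx := by
      rintro t ht (⟨⟨i, j⟩, hp⟩ | ⟨⟨i, hi⟩, k⟩) hneg hmin
      · -- an interior advection–diffusion grid point
        obtain ⟨h1, h2, h3, h4⟩ := hmemA (i, j) hp
        have htcc : t ∈ Icc c b₂ := ⟨ht.1, ht.2.le⟩
        have htT : t ∈ Ico 0 T := hsubIcoT htcc
        replace hneg : A t i j ≤ 0 := hneg
        have hlow : ∀ idx, A t i j ≤ x t idx := hmin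
        have hc₃m0 : c₃ * A t i j ≤ 0 :=
          mul_nonpos_of_nonneg_of_nonpos (by linarith only [hc₃1]) hneg
        have hc₃mm : c₃ * A t i j ≤ A t i j := by nlinarith only [hneg, hc₃1]
        have hn₁ : c₃ * A t i j ≤ A t (i - 1) j := by
          rcases Nat.lt_or_ge 1 i with h | h
          · exact le_trans hc₃mm
              (hlow (Sum.inl ⟨(i - 1, j), hmemA' _ (by omega) (by omega) h3 h4⟩))
          · have hi1 : i = 1 := by omega
            subst hi1
            rw [(by norm_num : (1:ℕ) - 1 = 0), hinlet t htT j (by omega)]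
            linarith only [hc₃m0, hA₁]
        have hn₂ : c₃ * A t i j ≤ A t (i + 1) j := by
          rcases Nat.lt_or_ge i (P - 1) with h | h
          · exact le_trans hc₃mm
              (hlow (Sum.inl ⟨(i + 1, j), hmemA' _ (by omega) (by omega) h3 h4⟩))
          · have hiP : i + 1 = P := by omega
            rw [hiP, houtlet t htT j (by omega), (by omega : P - 1 = i)]
            exact hc₃mm
        have hn₄ : c₃ * A t i j ≤ A t i (j + 1) := by
          rcases Nat.lt_or_ge j (Q - 1) with h | h
          · exact le_trans hc₃mm
              (hlow (Sum.inl ⟨(i, j + 1), hmemA' _ h1 h2 (by omega) (by omega)⟩))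
          · have hjQ : j + 1 = Q := by omega
            rw [hjQ, hceiling t htT i (by omega), (by omega : Q - 1 = j)]
            exact hc₃mm
        have hn₃ : c₃ * A t i j ≤ A t i (j - 1) := by
          rcases Nat.lt_or_ge 1 j with h | h
          · exact le_trans hc₃mm
              (hlow (Sum.inl ⟨(i, j - 1), hmemA' _ h1 h2 (by omega) (by omega)⟩))
          · have hj1 : j = 1 := by omega
            subst hj1
            rw [(by norm_num : (1:ℕ) - 1 = 0)]
            by_cases hiV : i ∈ V
            · exact (hA0 t htcc (A t i 1) hneg hlow i hiV).1
            · rw [hfloor t htT i h1 h2 hiV]; exact hc₃mm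
        have hvj := hv j h3 h4
        have hvΔ : v j * Δy < γ := by
          rw [lt_div_iff₀ hvbar] at hΔyγ
          nlinarith only [hΔyγ, hvj.2, hΔy]
        obtain ⟨a', ha'⟩ : ∃ z, γ / Δy ^ 2 = z := ⟨_, rfl⟩
        obtain ⟨b', hb'⟩ : ∃ z, v j / Δy = z := ⟨_, rfl⟩
        obtain ⟨cz, hczeq⟩ : ∃ z, γ / Δz ^ 2 = z := ⟨_, rfl⟩
        have ha'0 : 0 < a' := ha' ▸ (by positivity)
        have hcz0 : 0 < cz := hczeq ▸ (by positivity)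
        have hb'0 : 0 ≤ b' := hb' ▸ div_nonneg hvj.1 hΔy.le
        have hb'a : b' ≤ a' := by
          rw [← ha', ← hb', div_le_div_iff₀ hΔy (by positivity)]
          nlinarith only [hvΔ, hΔy]
        have hKA2 : K = c₃ * (2 * a' + 2 * cz) + c₃ * (M₂ + 1) *
            (f₁ + f₂ + f₃ + f₄ + f₅ + f₆ + f₇ + r₁ + r₂ + r₃ + r₄ + r₅ + r₆ + r₇) + 1 := by
          rw [hK_def, ← ha', ← hczeq]; ring
        have hKA : c₃ * (2 * a' + 2 * cz) ≤ K := by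
          have h5 : 0 ≤ c₃ * (M₂ + 1) *
              (f₁ + f₂ + f₃ + f₄ + f₅ + f₆ + f₇ + r₁ + r₂ + r₃ + r₄ + r₅ + r₆ + r₇) :=
            mul_nonneg (mul_nonneg (by linarith only [hc₃1]) (by linarith only [hM₂0]))
              (by linarith only [hf₁, hf₂, hf₃, hf₄, hf₅, hf₆, hf₇,
                hr₁, hr₂, hr₃, hr₄, hr₅, hr₆, hr₇])
          linarith only [h5, hKA2]
        have T1 : 0 ≤ a' * (A t (i - 1) j - c₃ * A t i j) :=
          mul_nonneg ha'0.le (by linarith only [hn₁])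
        have T2 : 0 ≤ (a' - b') * (A t (i + 1) j - c₃ * A t i j) :=
          mul_nonneg (by linarith only [hb'a]) (by linarith only [hn₂])
        have T3 : 0 ≤ cz * (A t i (j - 1) - c₃ * A t i j) :=
          mul_nonneg hcz0.le (by linarith only [hn₃])
        have T4 : 0 ≤ cz * (A t i (j + 1) - c₃ * A t i j) :=
          mul_nonneg hcz0.le (by linarith only [hn₄])
        have T5 : 0 ≤ (K - c₃ * (2 * a' + 2 * cz)) * (-(A t i j)) :=
          mul_nonneg (by linarith only [hKA]) (by linarith only [hneg])
        have T6 : 0 ≤ (2 * a' + 2 * cz) * (-(A t i j)) :=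
          mul_nonneg (by linarith only [ha'0, hcz0]) (by linarith only [hneg])
        have T7 : 0 ≤ (c₃ - 1) * b' * (-(A t i j)) :=
          mul_nonneg (mul_nonneg (by linarith only [hc₃1]) hb'0) (by linarith only [hneg])
        show K * A t i j ≤ γ * (A t (i - 1) j - 2 * A t i j + A t (i + 1) j) / Δy ^ 2
            - v j * (A t (i + 1) j - A t i j) / Δy
            + γ * (A t i (j - 1) - 2 * A t i j + A t i (j + 1)) / Δz ^ 2
        have hEq : γ * (A t (i - 1) j - 2 * A t i j + A t (i + 1) j) / Δy ^ 2
            - v j * (A t (i + 1) j - A t i j) / Δy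
            + γ * (A t i (j - 1) - 2 * A t i j + A t i (j + 1)) / Δz ^ 2
          = a' * (A t (i - 1) j - 2 * A t i j + A t (i + 1) j)
            - b' * (A t (i + 1) j - A t i j)
            + cz * (A t i (j - 1) - 2 * A t i j + A t i (j + 1)) := by
          rw [← ha', ← hb', ← hczeq]; ring
        rw [hEq]
        nlinarith only [T1, T2, T3, T4, T5, T6, T7]
      · -- a sensor grid point
        have htcc : t ∈ Icc c b₂ := ⟨ht.1, ht.2.le⟩
        have htT : t ∈ Ico 0 T := hsubIcoT htcc
        obtain ⟨hi1, hi2⟩ := hV i hi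
        replace hneg : u t i k ≤ 0 := hneg
        have hlow : ∀ idx, u t i k ≤ x t idx := hmin
        obtain ⟨hA0l, hA0lb, hA0ub⟩ := hA0 t htcc (u t i k) hneg hlow i hi
        have hc₃mm : c₃ * u t i k ≤ u t i k := by nlinarith only [hneg, hc₃1]
        have hul : ∀ l, c₃ * u t i k ≤ u t i l :=
          fun l => le_trans hc₃mm (hlow (Sum.inr ⟨⟨i, hi⟩, l⟩))
        have huub : ∀ l, u t i l ≤ M₂ :=
          fun l => le_trans (abs_le.1 (habs t htcc (Sum.inr ⟨⟨i, hi⟩, l⟩))).2 hMM₂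
        have hulb : ∀ l, -M₂ ≤ u t i l := fun l =>
          le_trans (by linarith only [hMM₂] : -M₂ ≤ -M)
            (abs_le.1 (habs t htcc (Sum.inr ⟨⟨i, hi⟩, l⟩))).1
        have hsl : ∀ r : ℝ, 0 ≤ r → 0 ≤ c₃ * (M₂ + 1) * r * (-(u t i k)) := fun r hr =>
          mul_nonneg (mul_nonneg (mul_nonneg (by linarith only [hc₃1])
            (by linarith only [hM₂0])) hr) (by linarith only [hneg])
        have hKA' : 0 ≤ c₃ * (2 * γ / Δy ^ 2 + 2 * γ / Δz ^ 2) * (-(u t i k)) :=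
          mul_nonneg (mul_nonneg (by linarith only [hc₃1]) (by positivity))
            (by linarith only [hneg])
        fin_cases k
        · show K * u t i 0 ≤ -(f₁ * A t i 0 * u t i 0 - r₁ * u t i 4)
            - (f₄ * u t i 5 * u t i 0 - r₄ * u t i 6)
          have hne : u t i 0 ≤ 0 := hneg
          have hA0l' : c₃ * u t i 0 ≤ A t i 0 := hA0l
          have hul' : ∀ l, c₃ * u t i 0 ≤ u t i l := hul
          have hsl' : ∀ r : ℝ, 0 ≤ r → 0 ≤ c₃ * (M₂ + 1) * r * (-(u t i 0)) := hsl
          have hKA'' : 0 ≤ c₃ * (2 * γ / Δy ^ 2 + 2 * γ / Δz ^ 2) * (-(u t i 0)) := hKA'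
          have G1 := term_diag hf₁ hne hM₂0 hc₃1 hA0lb
          have G2 := term_lin hr₁ hne hM₂0 hc₃1 (hul' 4)
          have G3 := term_diag hf₄ hne hM₂0 hc₃1 (hulb 5)
          have G4 := term_lin hr₄ hne hM₂0 hc₃1 (hul' 6)
          rw [hK_def]
          linarith only [G1, G2, G3, G4, hsl' f₂ hf₂, hsl' f₃ hf₃, hsl' f₅ hf₅,
            hsl' f₆ hf₆, hsl' f₇ hf₇, hsl' r₂ hr₂, hsl' r₃ hr₃, hsl' r₅ hr₅,
            hsl' r₆ hr₆, hsl' r₇ hr₇, hKA'', hne]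
        · show K * u t i 1 ≤ -(f₂ * A t i 0 * u t i 1 - r₂ * u t i 5)
            - (f₃ * u t i 4 * u t i 1 - r₃ * u t i 6) - (f₅ * u t i 1 * u t i 3 - r₅ * u t i 2)
          have hne : u t i 1 ≤ 0 := hneg
          have hul' : ∀ l, c₃ * u t i 1 ≤ u t i l := hul
          have hsl' : ∀ r : ℝ, 0 ≤ r → 0 ≤ c₃ * (M₂ + 1) * r * (-(u t i 1)) := hsl
          have hKA'' : 0 ≤ c₃ * (2 * γ / Δy ^ 2 + 2 * γ / Δz ^ 2) * (-(u t i 1)) := hKA'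
          have G1 := term_diag hf₂ hne hM₂0 hc₃1 hA0lb
          have G2 := term_lin hr₂ hne hM₂0 hc₃1 (hul' 5)
          have G3 := term_diag hf₃ hne hM₂0 hc₃1 (hulb 4)
          have G4 := term_lin hr₃ hne hM₂0 hc₃1 (hul' 6)
          have G5 := term_diag hf₅ hne hM₂0 hc₃1 (hulb 3)
          have G6 := term_lin hr₅ hne hM₂0 hc₃1 (hul' 2)
          rw [hK_def]
          linarith only [G1, G2, G3, G4, G5, G6, hsl' f₁ hf₁, hsl' f₄ hf₄, hsl' f₆ hf₆,
            hsl' f₇ hf₇, hsl' r₁ hr₁, hsl' r₄ hr₄, hsl' r₆ hr₆, hsl' r₇ hr₇, hKA'', hne]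
        · show K * u t i 2 ≤ (f₅ * u t i 1 * u t i 3 - r₅ * u t i 2)
            - (f₆ * A t i 0 * u t i 2 - r₆ * u t i 7)
          have hne : u t i 2 ≤ 0 := hneg
          have hul' : ∀ l, c₃ * u t i 2 ≤ u t i l := hul
          have hsl' : ∀ r : ℝ, 0 ≤ r → 0 ≤ c₃ * (M₂ + 1) * r * (-(u t i 2)) := hsl
          have hKA'' : 0 ≤ c₃ * (2 * γ / Δy ^ 2 + 2 * γ / Δz ^ 2) * (-(u t i 2)) := hKA'
          have G1 := term_lb hf₅ hne hM₂0 hc₃1 (hul' 1) (hul' 3) (huub 1) (huub 3)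
          have G2 := term_lin_diag (r := r₅) (m := u t i 2) hr₅ hne hM₂0 hc₃1
          have G3 := term_diag hf₆ hne hM₂0 hc₃1 hA0lb
          have G4 := term_lin hr₆ hne hM₂0 hc₃1 (hul' 7)
          rw [hK_def]
          linarith only [G1, G2, G3, G4, hsl' f₁ hf₁, hsl' f₂ hf₂, hsl' f₃ hf₃,
            hsl' f₄ hf₄, hsl' f₇ hf₇, hsl' r₁ hr₁, hsl' r₂ hr₂, hsl' r₃ hr₃,
            hsl' r₄ hr₄, hsl' r₇ hr₇, hKA'', hne]
        · show K * u t i 3 ≤ -(f₅ * u t i 1 * u t i 3 - r₅ * u t i 2)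
            - (f₇ * u t i 5 * u t i 3 - r₇ * u t i 7)
          have hne : u t i 3 ≤ 0 := hneg
          have hul' : ∀ l, c₃ * u t i 3 ≤ u t i l := hul
          have hsl' : ∀ r : ℝ, 0 ≤ r → 0 ≤ c₃ * (M₂ + 1) * r * (-(u t i 3)) := hsl
          have hKA'' : 0 ≤ c₃ * (2 * γ / Δy ^ 2 + 2 * γ / Δz ^ 2) * (-(u t i 3)) := hKA'
          have G1 := term_diag hf₅ hne hM₂0 hc₃1 (hulb 1)
          have G2 := term_lin hr₅ hne hM₂0 hc₃1 (hul' 2)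
          have G3 := term_diag hf₇ hne hM₂0 hc₃1 (hulb 5)
          have G4 := term_lin hr₇ hne hM₂0 hc₃1 (hul' 7)
          rw [hK_def]
          linarith only [G1, G2, G3, G4, hsl' f₁ hf₁, hsl' f₂ hf₂, hsl' f₃ hf₃,
            hsl' f₄ hf₄, hsl' f₆ hf₆, hsl' r₁ hr₁, hsl' r₂ hr₂, hsl' r₃ hr₃,
            hsl' r₄ hr₄, hsl' r₆ hr₆, hKA'', hne]
        · show K * u t i 4 ≤ (f₁ * A t i 0 * u t i 0 - r₁ * u t i 4)
            - (f₃ * u t i 4 * u t i 1 - r₃ * u t i 6)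
          have hne : u t i 4 ≤ 0 := hneg
          have hA0l' : c₃ * u t i 4 ≤ A t i 0 := hA0l
          have hul' : ∀ l, c₃ * u t i 4 ≤ u t i l := hul
          have hsl' : ∀ r : ℝ, 0 ≤ r → 0 ≤ c₃ * (M₂ + 1) * r * (-(u t i 4)) := hsl
          have hKA'' : 0 ≤ c₃ * (2 * γ / Δy ^ 2 + 2 * γ / Δz ^ 2) * (-(u t i 4)) := hKA'
          have G1 := term_lb hf₁ hne hM₂0 hc₃1 hA0l' (hul' 0) hA0ub (huub 0)
          have G2 := term_lin_diag (r := r₁) (m := u t i 4) hr₁ hne hM₂0 hc₃1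
          have G3 := term_diag hf₃ hne hM₂0 hc₃1 (hulb 1)
          have G4 := term_lin hr₃ hne hM₂0 hc₃1 (hul' 6)
          rw [hK_def]
          linarith only [G1, G2, G3, G4, hsl' f₂ hf₂, hsl' f₄ hf₄, hsl' f₅ hf₅,
            hsl' f₆ hf₆, hsl' f₇ hf₇, hsl' r₂ hr₂, hsl' r₄ hr₄, hsl' r₅ hr₅,
            hsl' r₆ hr₆, hsl' r₇ hr₇, hKA'', hne]
        · show K * u t i 5 ≤ (f₂ * A t i 0 * u t i 1 - r₂ * u t i 5)
            - (f₄ * u t i 5 * u t i 0 - r₄ * u t i 6) - (f₇ * u t i 5 * u t i 3 - r₇ * u t i 7)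
          have hne : u t i 5 ≤ 0 := hneg
          have hA0l' : c₃ * u t i 5 ≤ A t i 0 := hA0l
          have hul' : ∀ l, c₃ * u t i 5 ≤ u t i l := hul
          have hsl' : ∀ r : ℝ, 0 ≤ r → 0 ≤ c₃ * (M₂ + 1) * r * (-(u t i 5)) := hsl
          have hKA'' : 0 ≤ c₃ * (2 * γ / Δy ^ 2 + 2 * γ / Δz ^ 2) * (-(u t i 5)) := hKA'
          have G1 := term_lb hf₂ hne hM₂0 hc₃1 hA0l' (hul' 1) hA0ub (huub 1)
          have G2 := term_lin_diag (r := r₂) (m := u t i 5) hr₂ hne hM₂0 hc₃1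
          have G3 := term_diag hf₄ hne hM₂0 hc₃1 (hulb 0)
          have G4 := term_lin hr₄ hne hM₂0 hc₃1 (hul' 6)
          have G5 := term_diag hf₇ hne hM₂0 hc₃1 (hulb 3)
          have G6 := term_lin hr₇ hne hM₂0 hc₃1 (hul' 7)
          rw [hK_def]
          linarith only [G1, G2, G3, G4, G5, G6, hsl' f₁ hf₁, hsl' f₃ hf₃, hsl' f₅ hf₅,
            hsl' f₆ hf₆, hsl' r₁ hr₁, hsl' r₃ hr₃, hsl' r₅ hr₅, hsl' r₆ hr₆, hKA'', hne]
        · show K * u t i 6 ≤ (f₃ * u t i 4 * u t i 1 - r₃ * u t i 6)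
            + (f₄ * u t i 5 * u t i 0 - r₄ * u t i 6)
          have hne : u t i 6 ≤ 0 := hneg
          have hul' : ∀ l, c₃ * u t i 6 ≤ u t i l := hul
          have hsl' : ∀ r : ℝ, 0 ≤ r → 0 ≤ c₃ * (M₂ + 1) * r * (-(u t i 6)) := hsl
          have hKA'' : 0 ≤ c₃ * (2 * γ / Δy ^ 2 + 2 * γ / Δz ^ 2) * (-(u t i 6)) := hKA'
          have G1 := term_lb hf₃ hne hM₂0 hc₃1 (hul' 4) (hul' 1) (huub 4) (huub 1)
          have G2 := term_lin_diag (r := r₃) (m := u t i 6) hr₃ hne hM₂0 hc₃1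
          have G3 := term_lb hf₄ hne hM₂0 hc₃1 (hul' 5) (hul' 0) (huub 5) (huub 0)
          have G4 := term_lin_diag (r := r₄) (m := u t i 6) hr₄ hne hM₂0 hc₃1
          rw [hK_def]
          linarith only [G1, G2, G3, G4, hsl' f₁ hf₁, hsl' f₂ hf₂, hsl' f₅ hf₅,
            hsl' f₆ hf₆, hsl' f₇ hf₇, hsl' r₁ hr₁, hsl' r₂ hr₂, hsl' r₅ hr₅,
            hsl' r₆ hr₆, hsl' r₇ hr₇, hKA'', hne]
        · show K * u t i 7 ≤ (f₆ * A t i 0 * u t i 2 - r₆ * u t i 7)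
            + (f₇ * u t i 5 * u t i 3 - r₇ * u t i 7)
          have hne : u t i 7 ≤ 0 := hneg
          have hA0l' : c₃ * u t i 7 ≤ A t i 0 := hA0l
          have hul' : ∀ l, c₃ * u t i 7 ≤ u t i l := hul
          have hsl' : ∀ r : ℝ, 0 ≤ r → 0 ≤ c₃ * (M₂ + 1) * r * (-(u t i 7)) := hsl
          have hKA'' : 0 ≤ c₃ * (2 * γ / Δy ^ 2 + 2 * γ / Δz ^ 2) * (-(u t i 7)) := hKA'
          have G1 := term_lb hf₆ hne hM₂0 hc₃1 hA0l' (hul' 2) hA0ub (huub 2)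
          have G2 := term_lin_diag (r := r₆) (m := u t i 7) hr₆ hne hM₂0 hc₃1
          have G3 := term_lb hf₇ hne hM₂0 hc₃1 (hul' 5) (hul' 3) (huub 5) (huub 3)
          have G4 := term_lin_diag (r := r₇) (m := u t i 7) hr₇ hne hM₂0 hc₃1
          rw [hK_def]
          linarith only [G1, G2, G3, G4, hsl' f₁ hf₁, hsl' f₂ hf₂, hsl' f₃ hf₃,
            hsl' f₄ hf₄, hsl' f₅ hf₅, hsl' r₁ hr₁, hsl' r₂ hr₂, hsl' r₃ hr₃,
            hsl' r₄ hr₄, hsl' r₅ hr₅, hKA'', hne]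
    -- apply the abstract nonnegativity lemma and produce the required point of s
    have hnon := quasipos_nonneg hcb₂ hKpos hderiv hx0 hq
    have hzmem : min b₂ y ∈ Icc c b₂ :=
      ⟨le_min hcb₂.le (le_of_lt (mem_Ioi.1 hy)), min_le_left _ _⟩
    refine ⟨min b₂ y, ⟨?_, ?_⟩, lt_min hcb₂ (mem_Ioi.1 hy), min_le_right _ _⟩
    · intro i' j' h1 h2 h3 h4
      exact hnon _ hzmem (Sum.inl ⟨(i', j'), hmemA' _ h1 h2 h3 h4⟩)
    · intro i' hi' k'
      exact hnon _ hzmem (Sum.inr ⟨⟨i', hi'⟩, k'⟩)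
end

section
/- Strong consistency of the least squares concentration estimator for a biosensor array (first claim of Theorem 4.4, made explicit): Let Θ = [0, A_max] ⊂ ℝ be compact with A* ∈ Θ, let α ∈ (0, 1], and let g : [0, A_max] × [0,∞) → ℝ be such that g(·, t) is continuous for each t ≥ 0 and g(·, t) → g_e uniformly on [0, A_max] as t → ∞, where g_e : [0, A_max] → ℝ is continuous and injective. Let (t^k)_{k∈ℕ} be sampling times with t^k → ∞, and suppose the observations are m_i^k = g(α^{i−1} A*, t^k) + n_i^k for i = 1,…,N and k = 1,2,…, where the noise variables n_i^k are independent identically distributed with mean zero and finite variance σ² > 0. Then any sequence (Â₁(S))_{S∈ℕ} of measurable minimizers over Θ of A₁ ↦ S⁻¹ ∑_{i=1}^N ∑_{k=1}^S (m_i^k − g(α^{i−1} A₁, t^k))² converges to A* almost surely as S → ∞. -/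
open MeasureTheory Filter ProbabilityTheory Set


lemma sum_Icc_one (S : ℕ) (f : ℕ → ℝ) :
    ∑ k ∈ Finset.Icc 1 S, f k = ∑ j ∈ Finset.range S, f (j + 1) := by
  rw [← Finset.Ico_add_one_right_eq_Icc, Finset.sum_Ico_eq_sum_range]
  simp [add_comm]

lemma wcesaro {w x : ℕ → ℝ} (hx0 : ∀ k, 0 ≤ x k) (hw0 : ∀ k, 0 ≤ w k)
    (hw : Tendsto w atTop (nhds 0)) {c : ℝ}
    (hx : Tendsto (fun S : ℕ => (S : ℝ)⁻¹ * ∑ k ∈ Finset.range S, x k) atTop (nhds c)) :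
    Tendsto (fun S : ℕ => (S : ℝ)⁻¹ * ∑ k ∈ Finset.range S, w k * x k) atTop (nhds 0) := by
  have hc : 0 ≤ c :=
    ge_of_tendsto' hx fun S => mul_nonneg (by positivity) (Finset.sum_nonneg fun k _ => hx0 k)
  rw [Metric.tendsto_atTop]
  intro ε hε
  set δ : ℝ := ε / (2 * (c + 1)) with hδdef
  have hδpos : 0 < δ := by positivity
  obtain ⟨K, hK⟩ := Metric.tendsto_atTop.1 hw δ hδpos
  have hKw : ∀ k ≥ K, w k ≤ δ := by
    intro k hk
    have := hK k hk
    rw [Real.dist_eq, sub_zero] at this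
    exact (abs_le.1 this.le).2
  set B : ℝ := ∑ k ∈ Finset.range K, w k * x k with hBdef
  have hB0 : 0 ≤ B := Finset.sum_nonneg fun k _ => mul_nonneg (hw0 k) (hx0 k)
  have hupper : ∀ S, K ≤ S →
      (S : ℝ)⁻¹ * ∑ k ∈ Finset.range S, w k * x k ≤
        (S : ℝ)⁻¹ * B + δ * ((S : ℝ)⁻¹ * ∑ k ∈ Finset.range S, x k) := by
    intro S hS
    have h1 : ∑ k ∈ Finset.range S, w k * x k ≤ B + δ * ∑ k ∈ Finset.range S, x k := by
      rw [← Finset.sum_range_add_sum_Ico _ hS]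
      have h2 : ∑ k ∈ Finset.Ico K S, w k * x k ≤ δ * ∑ k ∈ Finset.range S, x k := by
        calc ∑ k ∈ Finset.Ico K S, w k * x k ≤ ∑ k ∈ Finset.Ico K S, δ * x k :=
              Finset.sum_le_sum fun k hk =>
                mul_le_mul_of_nonneg_right (hKw k (Finset.mem_Ico.1 hk).1) (hx0 k)
          _ = δ * ∑ k ∈ Finset.Ico K S, x k := by rw [Finset.mul_sum]
          _ ≤ δ * ∑ k ∈ Finset.range S, x k := by
              apply mul_le_mul_of_nonneg_left _ hδpos.le
              apply Finset.sum_le_sum_of_subset_of_nonneg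
              · intro k hk
                exact Finset.mem_range.2 (Finset.mem_Ico.1 hk).2
              · exact fun k _ _ => hx0 k
      linarith
    have h3 := mul_le_mul_of_nonneg_left h1 (inv_nonneg.2 (Nat.cast_nonneg S) :
      (0:ℝ) ≤ (S:ℝ)⁻¹)
    calc (S : ℝ)⁻¹ * ∑ k ∈ Finset.range S, w k * x k
        ≤ (S : ℝ)⁻¹ * (B + δ * ∑ k ∈ Finset.range S, x k) := h3
      _ = (S : ℝ)⁻¹ * B + δ * ((S : ℝ)⁻¹ * ∑ k ∈ Finset.range S, x k) := by ring
  have hinv : Tendsto (fun S : ℕ => (S : ℝ)⁻¹) atTop (nhds 0) :=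
    tendsto_inv_atTop_zero.comp tendsto_natCast_atTop_atTop
  have hlim : Tendsto (fun S : ℕ => (S : ℝ)⁻¹ * B + δ * ((S : ℝ)⁻¹ * ∑ k ∈ Finset.range S, x k))
      atTop (nhds (0 * B + δ * c)) := (hinv.mul_const B).add (hx.const_mul δ)
  rw [zero_mul, zero_add] at hlim
  have hδc : δ * c < ε := by
    rw [hδdef]
    rw [div_mul_eq_mul_div, div_lt_iff₀ (by positivity)]
    nlinarith
  have hev := hlim.eventually_lt_const hδc
  rw [eventually_atTop] at hev
  obtain ⟨M, hM⟩ := hev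
  refine ⟨max K M, fun S hS => ?_⟩
  have hterm0 : 0 ≤ (S : ℝ)⁻¹ * ∑ k ∈ Finset.range S, w k * x k :=
    mul_nonneg (by positivity) (Finset.sum_nonneg fun k _ => mul_nonneg (hw0 k) (hx0 k))
  rw [Real.dist_eq, sub_zero, abs_of_nonneg hterm0]
  calc (S : ℝ)⁻¹ * ∑ k ∈ Finset.range S, w k * x k
      ≤ (S : ℝ)⁻¹ * B + δ * ((S : ℝ)⁻¹ * ∑ k ∈ Finset.range S, x k) :=
        hupper S (le_trans (le_max_left _ _) hS)
    _ < ε := hM S (le_trans (le_max_right _ _) hS)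

/-- Strong consistency of the least squares concentration estimator for a biosensor array
(first claim of Theorem 4.4): with observations `m_i^k = g(α^{i−1} A*, t^k) + n_i^k`
(biosensor `i : Fin N` representing the `(i+1)`-st sensor, so its outer-compartment
concentration is `α^i A*`), i.i.d. mean-zero noise of finite variance `σ² > 0`,
`g(·, t) → g_e` uniformly with `g_e` continuous and injective on `Θ = [0, A_max]`, and
sampling times `t^k → ∞`, any sequence of measurable least squares estimators `Â₁(S)`
converges to the true inlet concentration `A*` almost surely as `S → ∞`. -/
theorem biosensor_array_ls_estimator_strongly_consistent
    {Amax : ℝ} (hAmax : 0 < Amax)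
    {Astar : ℝ} (hAstar : Astar ∈ Icc (0:ℝ) Amax)
    {α : ℝ} (hα : α ∈ Ioc (0:ℝ) 1)
    (g : ℝ → ℝ → ℝ) (ge : ℝ → ℝ)
    (hgc : ∀ t ≥ (0:ℝ), ContinuousOn (fun A => g A t) (Icc 0 Amax))
    (hgec : ContinuousOn ge (Icc 0 Amax)) (hgei : Set.InjOn ge (Icc 0 Amax))
    (hconv : TendstoUniformlyOn (fun (t : ℝ) (A : ℝ) => g A t) ge atTop (Icc 0 Amax))
    (tk : ℕ → ℝ) (htk0 : ∀ k, 0 ≤ tk k) (htk : Tendsto tk atTop atTop)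
    {N : ℕ} (hN : 0 < N)
    {Ω : Type*} [MeasurableSpace Ω] {P : Measure Ω} [IsProbabilityMeasure P]
    (noise : Fin N × ℕ → Ω → ℝ)
    (hnoisemeas : ∀ p, Measurable (noise p))
    (hindep : iIndepFun noise P)
    (hident : ∀ p q, IdentDistrib (noise p) (noise q) P P)
    {σ2 : ℝ} (hσ2 : 0 < σ2)
    (hmean : ∀ p, ∫ ω, noise p ω ∂P = 0)
    (hvar : ∀ p, ∫ ω, (noise p ω) ^ 2 ∂P = σ2)
    (m : Fin N → ℕ → Ω → ℝ)
    (hm : ∀ i k ω, m i k ω = g (α ^ (i : ℕ) * Astar) (tk k) + noise (i, k) ω)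
    (Ahat : ℕ → Ω → ℝ)
    (hAhatmeas : ∀ S, Measurable (Ahat S))
    (hAhatmem : ∀ S ω, Ahat S ω ∈ Icc (0:ℝ) Amax)
    (hAhatmin : ∀ (S : ℕ) ω, ∀ A₁ ∈ Icc (0:ℝ) Amax,
      (S : ℝ)⁻¹ * ∑ i, ∑ k ∈ Finset.Icc 1 S, (m i k ω - g (α ^ (i : ℕ) * Ahat S ω) (tk k)) ^ 2 ≤
      (S : ℝ)⁻¹ * ∑ i, ∑ k ∈ Finset.Icc 1 S, (m i k ω - g (α ^ (i : ℕ) * A₁) (tk k)) ^ 2) :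
    ∀ᵐ ω ∂P, Tendsto (fun S => Ahat S ω) atTop (nhds Astar) := by
  obtain ⟨hα0, hα1⟩ := hα
  have hΘc : IsCompact (Icc (0:ℝ) Amax) := isCompact_Icc
  have h0Θ : (0:ℝ) ∈ Icc (0:ℝ) Amax := ⟨le_refl 0, hAmax.le⟩
  -- membership of scaled concentrations
  have hmemΘ : ∀ (i : ℕ) {A : ℝ}, A ∈ Icc (0:ℝ) Amax → α ^ i * A ∈ Icc (0:ℝ) Amax := by
    intro i A hA
    constructor
    · exact mul_nonneg (pow_nonneg hα0.le i) hA.1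
    · calc α ^ i * A ≤ 1 * A :=
            mul_le_mul_of_nonneg_right (pow_le_one₀ hα0.le hα1) hA.1
        _ = A := one_mul A
        _ ≤ Amax := hA.2
  -- bound on ge
  obtain ⟨M, hM⟩ := hΘc.exists_bound_of_continuousOn hgec
  have hM' : ∀ x ∈ Icc (0:ℝ) Amax, |ge x| ≤ M := by
    intro x hx; simpa [Real.norm_eq_abs] using hM x hx
  have hM0 : 0 ≤ M := le_trans (abs_nonneg _) (hM' 0 h0Θ)
  -- limit discrepancy function
  set D : Fin N → ℝ → ℝ := fun i A => ge (α ^ (i : ℕ) * Astar) - ge (α ^ (i : ℕ) * A) with hD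
  set F : ℝ → ℝ := fun A => ∑ i : Fin N, (D i A) ^ 2 with hF
  have hDb : ∀ (i : Fin N) {A : ℝ}, A ∈ Icc (0:ℝ) Amax → |D i A| ≤ 2 * M := by
    intro i A hA
    have h1 := hM' _ (hmemΘ (i : ℕ) hAstar)
    have h2 := hM' _ (hmemΘ (i : ℕ) hA)
    calc |D i A| ≤ |ge (α ^ (i : ℕ) * Astar)| + |ge (α ^ (i : ℕ) * A)| := abs_sub _ _
      _ ≤ 2 * M := by linarith
  have hF0 : ∀ A, 0 ≤ F A := fun A => Finset.sum_nonneg fun i _ => sq_nonneg _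
  have hFzero : ∀ {x : ℝ}, x ∈ Icc (0:ℝ) Amax → F x = 0 → x = Astar := by
    intro x hx hFx
    have h1 : ∀ i ∈ Finset.univ, (D i x) ^ 2 = 0 :=
      (Finset.sum_eq_zero_iff_of_nonneg fun i _ => sq_nonneg _).1 hFx
    have h2 : D (⟨0, hN⟩ : Fin N) x = 0 := by
      have := h1 ⟨0, hN⟩ (Finset.mem_univ _)
      exact pow_eq_zero_iff (two_ne_zero) |>.1 this
    have h3 : ge Astar = ge x := by
      have : ge (α ^ ((⟨0, hN⟩ : Fin N) : ℕ) * Astar) = ge (α ^ ((⟨0, hN⟩ : Fin N) : ℕ) * x) :=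
        sub_eq_zero.1 h2
      simpa using this
    exact (hgei hx hAstar h3.symm)
  have hFcont : ContinuousOn F (Icc (0:ℝ) Amax) := by
    apply continuousOn_finset_sum
    intro i _
    apply ContinuousOn.pow
    apply ContinuousOn.sub continuousOn_const
    exact hgec.comp ((continuous_const.mul continuous_id).continuousOn)
      fun A hA => hmemΘ (i : ℕ) hA
  -- uniform error sequence u
  have hcontk : ∀ k, ContinuousOn (fun A => |g A (tk k) - ge A|) (Icc (0:ℝ) Amax) :=
    fun k => ((hgc (tk k) (htk0 k)).sub hgec).abs
  have hxk : ∀ k : ℕ, ∃ x ∈ Icc (0:ℝ) Amax,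
      ∀ y ∈ Icc (0:ℝ) Amax, |g y (tk k) - ge y| ≤ |g x (tk k) - ge x| := by
    intro k
    obtain ⟨x, hx, hmax⟩ := hΘc.exists_isMaxOn ⟨0, h0Θ⟩ (hcontk k)
    exact ⟨x, hx, fun y hy => hmax hy⟩
  choose xk hxkΘ hxkmax using hxk
  set u : ℕ → ℝ := fun k => |g (xk k) (tk k) - ge (xk k)| with hu
  have hu0 : ∀ k, 0 ≤ u k := fun k => abs_nonneg _
  have hub : ∀ (k : ℕ) {A : ℝ}, A ∈ Icc (0:ℝ) Amax → |g A (tk k) - ge A| ≤ u k :=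
    fun k A hA => hxkmax k A hA
  have hulim : Tendsto u atTop (nhds 0) := by
    rw [Metric.tendsto_atTop]
    intro ε hε
    have h1 : ∀ᶠ t in atTop, ∀ A ∈ Icc (0:ℝ) Amax, dist (ge A) (g A t) < ε :=
      Metric.tendstoUniformlyOn_iff.1 hconv ε hε
    have h2 : ∀ᶠ k in atTop, ∀ A ∈ Icc (0:ℝ) Amax, dist (ge A) (g A (tk k)) < ε :=
      htk.eventually h1
    rw [eventually_atTop] at h2
    obtain ⟨K, hK⟩ := h2
    refine ⟨K, fun k hk => ?_⟩
    have := hK k hk (xk k) (hxkΘ k)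
    rw [Real.dist_eq, sub_zero]
    rw [Real.dist_eq] at this
    rw [hu]
    simp only [abs_abs]
    rwa [abs_sub_comm]
  -- integrability of the noise
  have hint2 : ∀ p, Integrable (fun ω => (noise p ω) ^ 2) P := by
    intro p
    by_contra h
    have := hvar p
    rw [integral_undef h] at this
    exact hσ2.ne' this.symm
  have hint1 : ∀ p, Integrable (noise p) P := by
    intro p
    have h2 : MemLp (noise p) 2 P :=
      (memLp_two_iff_integrable_sq (hnoisemeas p).aestronglyMeasurable).2 (hint2 p)
    exact h2.integrable one_le_two
  have hintabs : ∀ p, Integrable (fun ω => |noise p ω|) P := fun p => (hint1 p).abs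
  -- strong law of large numbers for each sensor
  have hae : ∀ i : Fin N, ∀ᵐ ω ∂P,
      Tendsto (fun S : ℕ => (S : ℝ)⁻¹ * ∑ j ∈ Finset.range S, noise (i, j + 1) ω)
        atTop (nhds 0) ∧
      ∃ c : ℝ, Tendsto (fun S : ℕ => (S : ℝ)⁻¹ * ∑ j ∈ Finset.range S, |noise (i, j + 1) ω|)
        atTop (nhds c) := by
    intro i
    have hne : ∀ {j j' : ℕ}, j ≠ j' → ((i, j + 1) : Fin N × ℕ) ≠ (i, j' + 1) := by
      intro j j' hjj' h
      exact hjj' (by simpa using congrArg Prod.snd h)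
    have hpair : Pairwise (Function.onFun (IndepFun · · P) fun j : ℕ => noise (i, j + 1)) :=
      fun j j' hjj' => hindep.indepFun (hne hjj')
    have h1 := strong_law_ae_real (fun j => noise (i, j + 1)) (hint1 _) hpair
      (fun j => hident _ _)
    have hpair2 : Pairwise (Function.onFun (IndepFun · · P) fun j : ℕ => fun ω => |noise (i, j + 1) ω|) :=
      fun j j' hjj' => (hpair hjj').comp measurable_abs measurable_abs
    have h2 := strong_law_ae_real (fun j => fun ω => |noise (i, j + 1) ω|) (hintabs _) hpair2
      (fun j => (hident _ _).comp measurable_abs)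
    filter_upwards [h1, h2] with ω hω1 hω2
    constructor
    · have hzero : (∫ ω, noise (i, 0 + 1) ω ∂P) = 0 := hmean _
      rw [hzero] at hω1
      convert hω1 using 2 with S
      rw [div_eq_inv_mul]
    · refine ⟨∫ ω, |noise (i, 0 + 1) ω| ∂P, ?_⟩
      convert hω2 using 2 with S
      rw [div_eq_inv_mul]
  have haeall : ∀ᵐ ω ∂P, ∀ i : Fin N,
      Tendsto (fun S : ℕ => (S : ℝ)⁻¹ * ∑ j ∈ Finset.range S, noise (i, j + 1) ω)
        atTop (nhds 0) ∧
      ∃ c : ℝ, Tendsto (fun S : ℕ => (S : ℝ)⁻¹ * ∑ j ∈ Finset.range S, |noise (i, j + 1) ω|)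
        atTop (nhds c) := ae_all_iff.2 hae
  filter_upwards [haeall] with ω hω
  -- error functional G
  set G : Fin N → ℕ → ℝ := fun i S =>
    (S : ℝ)⁻¹ * ∑ k ∈ Finset.Icc 1 S, (u k * (8 * M + 4 * u k) + 4 * u k * |noise (i, k) ω|) +
      4 * M * |(S : ℝ)⁻¹ * ∑ k ∈ Finset.Icc 1 S, noise (i, k) ω| with hG
  have hGlim : ∀ i : Fin N, Tendsto (fun S => G i S) atTop (nhds 0) := by
    intro i
    obtain ⟨hn1, c, hn2⟩ := hω i
    have hu1lim : Tendsto (fun j : ℕ => u (j + 1)) atTop (nhds 0) :=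
      hulim.comp (tendsto_add_atTop_nat 1)
    have hxces : Tendsto (fun S : ℕ => (S : ℝ)⁻¹ * ∑ j ∈ Finset.range S, (8 * M + 4 * u (j + 1)))
        atTop (nhds (8 * M)) := by
      have hx : Tendsto (fun j : ℕ => 8 * M + 4 * u (j + 1)) atTop (nhds (8 * M + 4 * 0)) :=
        tendsto_const_nhds.add (hu1lim.const_mul 4)
      rw [mul_zero, add_zero] at hx
      simpa using hx.cesaro
    have hp1 : Tendsto (fun S : ℕ =>
        (S : ℝ)⁻¹ * ∑ j ∈ Finset.range S, u (j + 1) * (8 * M + 4 * u (j + 1)))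
        atTop (nhds 0) := by
      apply wcesaro (w := fun j => u (j + 1)) (x := fun j => 8 * M + 4 * u (j + 1))
      · intro k; positivity
      · intro k; exact hu0 _
      · exact hu1lim
      · exact hxces
    have hp2 : Tendsto (fun S : ℕ =>
        (S : ℝ)⁻¹ * ∑ j ∈ Finset.range S, (4 * u (j + 1)) * |noise (i, j + 1) ω|)
        atTop (nhds 0) := by
      apply wcesaro (w := fun j => 4 * u (j + 1)) (x := fun j => |noise (i, j + 1) ω|)
      · intro k; exact abs_nonneg _
      · intro k; positivity
      · simpa using hu1lim.const_mul 4
      · exact hn2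
    have hp3 : Tendsto (fun S : ℕ =>
        4 * M * |(S : ℝ)⁻¹ * ∑ j ∈ Finset.range S, noise (i, j + 1) ω|) atTop (nhds 0) := by
      have := (hn1.abs).const_mul (4 * M)
      simpa using this
    have htot := (hp1.add hp2).add hp3
    rw [add_zero, add_zero] at htot
    have heq : (fun S => G i S) = fun S : ℕ =>
        ((S : ℝ)⁻¹ * ∑ j ∈ Finset.range S, u (j + 1) * (8 * M + 4 * u (j + 1)) +
          (S : ℝ)⁻¹ * ∑ j ∈ Finset.range S, (4 * u (j + 1)) * |noise (i, j + 1) ω|) +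
          4 * M * |(S : ℝ)⁻¹ * ∑ j ∈ Finset.range S, noise (i, j + 1) ω| := by
      funext S
      rw [hG]
      simp only
      rw [sum_Icc_one S (fun k => u k * (8 * M + 4 * u k) + 4 * u k * |noise (i, k) ω|),
        sum_Icc_one S (fun k => noise (i, k) ω), Finset.sum_add_distrib, mul_add]
      try ring
    rw [heq]
    exact htot
  -- the key deterministic inequality
  have key : ∀ S : ℕ, 1 ≤ S → F (Ahat S ω) ≤ ∑ i : Fin N, G i S := by
    intro S hS
    have hSpos : (0 : ℝ) < (S : ℝ) := by exact_mod_cast hS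
    have hSinvpos : (0 : ℝ) < (S : ℝ)⁻¹ := inv_pos.2 hSpos
    set d : Fin N → ℕ → ℝ := fun i k =>
      g (α ^ (i : ℕ) * Astar) (tk k) - g (α ^ (i : ℕ) * Ahat S ω) (tk k) with hd
    -- step 1 : the minimization inequality
    have hstep1 : ∑ i : Fin N, ∑ k ∈ Finset.Icc 1 S,
        (d i k ^ 2 + 2 * d i k * noise (i, k) ω) ≤ 0 := by
      have hmin := hAhatmin S ω Astar hAstar
      have hL : ∀ (i : Fin N) (k : ℕ), (m i k ω - g (α ^ (i : ℕ) * Ahat S ω) (tk k)) ^ 2 =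
          (d i k ^ 2 + 2 * d i k * noise (i, k) ω) + noise (i, k) ω ^ 2 := by
        intro i k; rw [hm, hd]; ring
      have hR : ∀ (i : Fin N) (k : ℕ), (m i k ω - g (α ^ (i : ℕ) * Astar) (tk k)) ^ 2 =
          noise (i, k) ω ^ 2 := by
        intro i k; rw [hm]; ring
      simp only [hL, hR, Finset.sum_add_distrib] at hmin
      have h1 := (mul_le_mul_iff_right₀ hSinvpos).1 hmin
      simp only [Finset.sum_add_distrib]
      linarith
    -- step 2 : per sensor lower bound
    have hper : ∀ i : Fin N, (D i (Ahat S ω)) ^ 2 ≤ G i S +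
        (S : ℝ)⁻¹ * ∑ k ∈ Finset.Icc 1 S, (d i k ^ 2 + 2 * d i k * noise (i, k) ω) := by
      intro i
      have hAS : Ahat S ω ∈ Icc (0:ℝ) Amax := hAhatmem S ω
      have hDDb : |D i (Ahat S ω)| ≤ 2 * M := hDb i hAS
      have hclose : ∀ k, |D i (Ahat S ω) - d i k| ≤ 2 * u k := by
        intro k
        have h1 := hub k (hmemΘ (i : ℕ) hAstar)
        have h2 := hub k (hmemΘ (i : ℕ) hAS)
        have he : D i (Ahat S ω) - d i k =
            (g (α ^ (i : ℕ) * Ahat S ω) (tk k) - ge (α ^ (i : ℕ) * Ahat S ω)) -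
              (g (α ^ (i : ℕ) * Astar) (tk k) - ge (α ^ (i : ℕ) * Astar)) := by
          rw [hD, hd]; ring
        rw [he]
        calc |_ - _| ≤ |g (α ^ (i : ℕ) * Ahat S ω) (tk k) - ge (α ^ (i : ℕ) * Ahat S ω)| +
              |g (α ^ (i : ℕ) * Astar) (tk k) - ge (α ^ (i : ℕ) * Astar)| := abs_sub _ _
          _ ≤ 2 * u k := by linarith
      have hdb : ∀ k, |d i k| ≤ 2 * M + 2 * u k := by
        intro k
        calc |d i k| = |D i (Ahat S ω) - (D i (Ahat S ω) - d i k)| := by ring_nf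
          _ ≤ |D i (Ahat S ω)| + |D i (Ahat S ω) - d i k| := abs_sub _ _
          _ ≤ 2 * M + 2 * u k := add_le_add hDDb (hclose k)
      have hpoint : ∀ k, (D i (Ahat S ω)) ^ 2 ≤
          (d i k ^ 2 + 2 * d i k * noise (i, k) ω) - 2 * D i (Ahat S ω) * noise (i, k) ω +
            (u k * (8 * M + 4 * u k) + 4 * u k * |noise (i, k) ω|) := by
        intro k
        have he : D i (Ahat S ω) ^ 2 - (d i k ^ 2 + 2 * d i k * noise (i, k) ω) +
            2 * D i (Ahat S ω) * noise (i, k) ω =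
            (D i (Ahat S ω) - d i k) * (D i (Ahat S ω) + d i k) +
              2 * (D i (Ahat S ω) - d i k) * noise (i, k) ω := by ring
        have hb1 : (D i (Ahat S ω) - d i k) * (D i (Ahat S ω) + d i k) ≤
            (2 * u k) * (4 * M + 2 * u k) := by
          calc (D i (Ahat S ω) - d i k) * (D i (Ahat S ω) + d i k) ≤
              |(D i (Ahat S ω) - d i k) * (D i (Ahat S ω) + d i k)| := le_abs_self _
            _ = |D i (Ahat S ω) - d i k| * |D i (Ahat S ω) + d i k| := abs_mul _ _
            _ ≤ (2 * u k) * (4 * M + 2 * u k) := by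
                apply mul_le_mul (hclose k) _ (abs_nonneg _) (by positivity)
                calc |D i (Ahat S ω) + d i k| ≤ |D i (Ahat S ω)| + |d i k| := abs_add_le _ _
                  _ ≤ 4 * M + 2 * u k := by
                      have := hdb k; linarith
        have hb2 : 2 * (D i (Ahat S ω) - d i k) * noise (i, k) ω ≤
            (2 * (2 * u k)) * |noise (i, k) ω| := by
          calc 2 * (D i (Ahat S ω) - d i k) * noise (i, k) ω ≤
              |2 * (D i (Ahat S ω) - d i k) * noise (i, k) ω| := le_abs_self _
            _ = 2 * |D i (Ahat S ω) - d i k| * |noise (i, k) ω| := by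
                rw [abs_mul, abs_mul]; simp [abs_of_nonneg]
            _ ≤ (2 * (2 * u k)) * |noise (i, k) ω| := by
                apply mul_le_mul_of_nonneg_right _ (abs_nonneg _)
                linarith [hclose k]
        nlinarith [he, hb1, hb2]
      have hsum0 := Finset.sum_le_sum fun k (_ : k ∈ Finset.Icc 1 S) => hpoint k
      rw [Finset.sum_const, Nat.card_Icc, Nat.add_sub_cancel, nsmul_eq_mul] at hsum0
      rw [Finset.sum_add_distrib, Finset.sum_sub_distrib, ← Finset.mul_sum] at hsum0
      -- hsum0 : S * DD^2 ≤ Σ₁ - 2DD * Σn + Σ₃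
      set p := ∑ k ∈ Finset.Icc 1 S, (d i k ^ 2 + 2 * d i k * noise (i, k) ω) with hp
      set q := ∑ k ∈ Finset.Icc 1 S, noise (i, k) ω with hq
      set r := ∑ k ∈ Finset.Icc 1 S, (u k * (8 * M + 4 * u k) + 4 * u k * |noise (i, k) ω|)
        with hr
      have h4 : (D i (Ahat S ω)) ^ 2 ≤
          (S : ℝ)⁻¹ * p - 2 * D i (Ahat S ω) * ((S : ℝ)⁻¹ * q) + (S : ℝ)⁻¹ * r := by
        rw [← mul_le_mul_iff_right₀ hSpos]
        have hre : (S : ℝ) * ((S : ℝ)⁻¹ * p - 2 * D i (Ahat S ω) * ((S : ℝ)⁻¹ * q) +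
            (S : ℝ)⁻¹ * r) = p - 2 * D i (Ahat S ω) * q + r := by
          field_simp
          try ring
        rw [hre]
        exact hsum0
      have h5 : -(2 * D i (Ahat S ω) * ((S : ℝ)⁻¹ * q)) ≤ 4 * M * |(S : ℝ)⁻¹ * q| := by
        calc -(2 * D i (Ahat S ω) * ((S : ℝ)⁻¹ * q)) ≤
            |2 * D i (Ahat S ω) * ((S : ℝ)⁻¹ * q)| := neg_le_abs _
          _ = 2 * |D i (Ahat S ω)| * |(S : ℝ)⁻¹ * q| := by
              rw [abs_mul, abs_mul]; simp [abs_of_nonneg]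
          _ ≤ 2 * (2 * M) * |(S : ℝ)⁻¹ * q| := by
              apply mul_le_mul_of_nonneg_right _ (abs_nonneg _)
              linarith
          _ = 4 * M * |(S : ℝ)⁻¹ * q| := by ring
      have hGi : G i S = (S : ℝ)⁻¹ * r + 4 * M * |(S : ℝ)⁻¹ * q| := by
        rw [hG, hr, hq]
      rw [hGi]
      linarith
    -- combine
    have hsum := Finset.sum_le_sum fun i (_ : i ∈ Finset.univ) => hper i
    rw [Finset.sum_add_distrib, ← Finset.mul_sum] at hsum
    have hnp : (S : ℝ)⁻¹ * ∑ i : Fin N, ∑ k ∈ Finset.Icc 1 S,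
        (d i k ^ 2 + 2 * d i k * noise (i, k) ω) ≤ 0 := by
      have := mul_le_mul_of_nonneg_left hstep1 hSinvpos.le
      rwa [mul_zero] at this
    rw [hF]
    simp only
    linarith
  -- F (Ahat S ω) tends to 0
  have hFlim : Tendsto (fun S => F (Ahat S ω)) atTop (nhds 0) := by
    have hGsum : Tendsto (fun S => ∑ i : Fin N, G i S) atTop (nhds 0) := by
      have := tendsto_finset_sum (Finset.univ : Finset (Fin N)) fun i _ => hGlim i
      simpa using this
    apply tendsto_of_tendsto_of_tendsto_of_le_of_le' tendsto_const_nhds hGsum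
    · exact Eventually.of_forall fun S => hF0 _
    · rw [eventually_atTop]; exact ⟨1, fun S hS => key S hS⟩
  -- conclude by the compactness argument
  rw [Metric.tendsto_atTop]
  intro ε hε
  set K : Set ℝ := Icc (0:ℝ) Amax ∩ {x | ε ≤ |x - Astar|} with hKdef
  have hKc : IsCompact K := by
    apply hΘc.inter_right
    have : Continuous fun x : ℝ => |x - Astar| := (continuous_id.sub continuous_const).abs
    exact isClosed_le continuous_const this
  by_cases hK : K.Nonempty
  · obtain ⟨x₀, hx₀K, hx₀min⟩ := hKc.exists_isMinOn hK (hFcont.mono inter_subset_left)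
    have hx₀pos : 0 < F x₀ := by
      rcases lt_or_eq_of_le (hF0 x₀) with h | h
      · exact h
      · exfalso
        have hx₀ : x₀ = Astar := hFzero hx₀K.1 h.symm
        have := hx₀K.2
        rw [hx₀] at this
        simp only [mem_setOf_eq, sub_self, abs_zero] at this
        linarith
    have hev := hFlim.eventually_lt_const hx₀pos
    rw [eventually_atTop] at hev
    obtain ⟨M₀, hM₀⟩ := hev
    refine ⟨M₀, fun S hS => ?_⟩
    by_contra h
    push_neg at h
    have hmem : Ahat S ω ∈ K := by
      refine ⟨hAhatmem S ω, ?_⟩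
      rw [mem_setOf_eq, ← Real.dist_eq]
      exact h
    have := hx₀min hmem
    have := hM₀ S hS
    exact absurd (hx₀min hmem) (by simpa using not_le.2 (hM₀ S hS))
  · refine ⟨0, fun S _ => ?_⟩
    by_contra h
    push_neg at h
    exact hK ⟨Ahat S ω, hAhatmem S ω, by rw [mem_setOf_eq, ← Real.dist_eq]; exact h⟩
end
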